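/- arXiv:2405.02596 — 2 statements merged into one kernel-verified Lean document; each statement's English description precedes it below -/
import Mathlib

section
/- Suppose y = X w* + ε where ε has mean zero and covariance σ² I_n, and gradient descent with η < 2n/λ_1 and zero initialization converges to ŵ = (XM)† y. Then E[||ŵ||²] ≥ σ² Σ_{i: λ_i > 0} 1/λ_i, where λ_i are the eigenvalues of M Xᵀ X M, and the expectation is over ε. -/
open Matrix Filter Topology MeasureTheory ProbabilityTheory

/-- The four Penrose conditions characterizing the Moore–Penrose pseudo-inverse. -/
def IsMoorePenrose {n d : ℕ} (A : Matrix (Fin n) (Fin d) ℝ) (B : Matrix (Fin d) (Fin n) ℝ) : Prop :=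
  A * B * A = A ∧ B * A * B = B ∧ (A * B)ᵀ = A * B ∧ (B * A)ᵀ = B * A

/-- Gradient descent iterates for L(w) = (1/2n)‖y - X M w‖², where
∇L(w) = (1/n)(M Xᵀ X M w - M Xᵀ y). -/
noncomputable def gd {n d : ℕ} (X : Matrix (Fin n) (Fin d) ℝ) (M : Matrix (Fin d) (Fin d) ℝ)
    (y : Fin n → ℝ) (η : ℝ) (w0 : Fin d → ℝ) : ℕ → (Fin d → ℝ)
  | 0 => w0
  | t + 1 => gd X M y η w0 t -
      η • ((n : ℝ)⁻¹ • ((M * Xᵀ * X * M).mulVec (gd X M y η w0 t) - (M * Xᵀ).mulVec y))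

/-- The `i`-th largest eigenvalue of a Hermitian real matrix. -/
noncomputable def ithLargest {d : ℕ} {A : Matrix (Fin d) (Fin d) ℝ} (hA : A.IsHermitian)
    (i : Fin d) : ℝ :=
  (hA.eigenvalues ∘ Tuple.sort hA.eigenvalues) i.rev

lemma diag_herm {n d : ℕ} (X : Matrix (Fin n) (Fin d) ℝ) (v : Fin d → ℝ) :
    (Matrix.diagonal v * Xᵀ * X * Matrix.diagonal v).IsHermitian := by
  have h : Matrix.diagonal v * Xᵀ * X * Matrix.diagonal v
      = (X * Matrix.diagonal v)ᵀ * (X * Matrix.diagonal v) := by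
    rw [Matrix.transpose_mul, Matrix.diagonal_transpose, Matrix.mul_assoc, Matrix.mul_assoc]
  rw [h]
  simpa using Matrix.isHermitian_conjTranspose_mul_self (X * Matrix.diagonal v)

lemma hermXtX {n d : ℕ} (X : Matrix (Fin n) (Fin d) ℝ) : (Xᵀ * X).IsHermitian := by
  simpa using Matrix.isHermitian_conjTranspose_mul_self X

/-- The spectral norm (largest singular value) of a square real matrix. -/
noncomputable def specNorm {n : ℕ} (A : Matrix (Fin n) (Fin n) ℝ) : ℝ :=
  ‖(Matrix.toEuclideanCLM (𝕜 := ℝ) A)‖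

lemma herm_left {n d : ℕ} (X : Matrix (Fin n) (Fin d) ℝ) (v : Fin d → ℝ) :
    (X * Matrix.diagonal v * Xᵀ).IsHermitian := by
  have h2 : (X * Matrix.diagonal v * Xᵀ)ᵀ = X * Matrix.diagonal v * Xᵀ := by
    rw [Matrix.transpose_mul, Matrix.transpose_mul, Matrix.transpose_transpose,
      Matrix.diagonal_transpose, Matrix.mul_assoc]
  rw [Matrix.IsHermitian]
  simpa using h2

lemma mp_unique {k d : ℕ} (A : Matrix (Fin k) (Fin d) ℝ) (B C : Matrix (Fin d) (Fin k) ℝ)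
    (hB : IsMoorePenrose A B) (hC : IsMoorePenrose A C) : B = C := by
  obtain ⟨hB1, hB2, hB3, hB4⟩ := hB
  obtain ⟨hC1, hC2, hC3, hC4⟩ := hC
  have hAB : A * B = A * C := by
    calc A * B = (A * C * A) * B := by rw [hC1]
    _ = (A * C)ᵀ * (A * B)ᵀ := by rw [hC3, hB3]; simp only [Matrix.mul_assoc]
    _ = Cᵀ * (A * B * A)ᵀ := by simp only [transpose_mul, Matrix.mul_assoc]
    _ = (A * C)ᵀ := by rw [hB1, transpose_mul]
    _ = A * C := hC3
  have hBA : B * A = C * A := by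
    calc B * A = B * (A * C * A) := by rw [hC1]
    _ = (B * A)ᵀ * (C * A)ᵀ := by rw [hC4, hB4]; simp only [Matrix.mul_assoc]
    _ = (A * B * A)ᵀ * Cᵀ := by simp only [transpose_mul, Matrix.mul_assoc]
    _ = (C * A)ᵀ := by rw [hB1, transpose_mul]
    _ = C * A := hC4
  calc B = B * A * B := hB2.symm
  _ = C * (A * B) := by rw [hBA,  Matrix.mul_assoc]
  _ = C * A * C := by rw [hAB,  Matrix.mul_assoc]
  _ = C := hC2

lemma mp_spec {d : ℕ} {H : Matrix (Fin d) (Fin d) ℝ} (hH : H.IsHermitian) :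
    IsMoorePenrose H ((hH.eigenvectorUnitary : Matrix (Fin d) (Fin d) ℝ) *
      diagonal (fun i => (hH.eigenvalues i)⁻¹) * (star hH.eigenvectorUnitary : Matrix (Fin d) (Fin d) ℝ)) := by
  set U : Matrix (Fin d) (Fin d) ℝ := (hH.eigenvectorUnitary : Matrix (Fin d) (Fin d) ℝ) with hU
  have hUU : star U * U = 1 := Unitary.coe_star_mul_self hH.eigenvectorUnitary
  have hUUs : U * star U = 1 := Unitary.coe_mul_star_self hH.eigenvectorUnitary
  have hspec : H = U * diagonal hH.eigenvalues * star U := by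
    have := hH.spectral_theorem
    simpa using this
  have key : ∀ a b : Fin d → ℝ, (U * diagonal a * star U) * (U * diagonal b * star U)
      = U * diagonal (fun i => a i * b i) * star U := by
    intro a b
    calc (U * diagonal a * star U) * (U * diagonal b * star U)
        = U * (diagonal a * ((star U * U) * (diagonal b * star U))) := by
          simp only [Matrix.mul_assoc]
      _ = U * diagonal (fun i => a i * b i) * star U := by
          rw [hUU, Matrix.one_mul, ← Matrix.mul_assoc, ← Matrix.mul_assoc,
            Matrix.mul_assoc U (diagonal a) (diagonal b), diagonal_mul_diagonal]
  have keyT : ∀ a : Fin d → ℝ, (U * diagonal a * star U)ᵀ = U * diagonal a * star U := by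
    intro a
    have hsU : star U = Uᵀ := rfl
    rw [hsU, transpose_mul, transpose_mul, transpose_transpose, diagonal_transpose,
      Matrix.mul_assoc]
  generalize hg : hH.eigenvalues = lam at hspec ⊢
  rw [hspec]
  refine ⟨?_, ?_, ?_, ?_⟩
  · rw [key, key]
    have : (fun i => lam i * (lam i)⁻¹ * lam i) = lam := by
      funext i
      rcases eq_or_ne (lam i) 0 with h | h
      · simp [h]
      · field_simp
    rw [this]
  · rw [key, key]
    have : (fun i => (lam i)⁻¹ * lam i * (lam i)⁻¹) = fun i => (lam i)⁻¹ := by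
      funext i
      rcases eq_or_ne (lam i) 0 with h | h
      · simp [h]
      · field_simp
    rw [this]
  · rw [key, keyT]
  · rw [key, keyT]

lemma ppt_mp {k e : ℕ} (A : Matrix (Fin k) (Fin e) ℝ) (P : Matrix (Fin e) (Fin k) ℝ)
    (hP : IsMoorePenrose A P) : IsMoorePenrose (Aᵀ * A) (P * Pᵀ) := by
  obtain ⟨h1, h2, h3, h4⟩ := hP
  have hPA : Pᵀ * Aᵀ = A * P := by rw [← transpose_mul, h3]
  have hAP : Aᵀ * Pᵀ = P * A := by rw [← transpose_mul, h4]
  have hQH : P * Pᵀ * (Aᵀ * A) = P * A := by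
    calc P * Pᵀ * (Aᵀ * A) = P * ((Pᵀ * Aᵀ) * A) := by simp only [Matrix.mul_assoc]
    _ = P * (A * P * A) := by rw [hPA, Matrix.mul_assoc]
    _ = P * A := by rw [h1]
  have hHQ : Aᵀ * A * (P * Pᵀ) = P * A := by
    calc Aᵀ * A * (P * Pᵀ) = Aᵀ * (A * P) * Pᵀ := by simp only [Matrix.mul_assoc]
    _ = Aᵀ * (Pᵀ * Aᵀ) * Pᵀ := by rw [hPA]
    _ = (Aᵀ * Pᵀ) * (Aᵀ * Pᵀ) := by simp only [Matrix.mul_assoc]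
    _ = P * A * P * A := by rw [hAP]; simp only [Matrix.mul_assoc]
    _ = P * A := by rw [h2]
  refine ⟨?_, ?_, ?_, ?_⟩
  · calc Aᵀ * A * (P * Pᵀ) * (Aᵀ * A) = P * A * (Aᵀ * A) := by rw [hHQ]
    _ = Aᵀ * Pᵀ * (Aᵀ * A) := by rw [hAP]
    _ = Aᵀ * ((Pᵀ * Aᵀ) * A) := by simp only [Matrix.mul_assoc]
    _ = Aᵀ * (A * P * A) := by rw [hPA, Matrix.mul_assoc]
    _ = Aᵀ * A := by rw [h1]
  · calc P * Pᵀ * (Aᵀ * A) * (P * Pᵀ) = P * A * (P * Pᵀ) := by rw [hQH]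
    _ = (P * A * P) * Pᵀ := by simp only [Matrix.mul_assoc]
    _ = P * Pᵀ := by rw [h2]
  · rw [hHQ, h4]
  · rw [hQH, h4]

lemma trace_ppt {d k : ℕ} {H : Matrix (Fin d) (Fin d) ℝ} (hH : H.IsHermitian)
    (A : Matrix (Fin k) (Fin d) ℝ) (P : Matrix (Fin d) (Fin k) ℝ)
    (hP : IsMoorePenrose A P) (hHA : H = Aᵀ * A) :
    Matrix.trace (P * Pᵀ) = ∑ i, (hH.eigenvalues i)⁻¹ := by
  have hQ : IsMoorePenrose H (P * Pᵀ) := hHA ▸ ppt_mp A P hP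
  have huniq := mp_unique H (P * Pᵀ) _ hQ (mp_spec hH)
  rw [huniq]
  rw [Matrix.trace_mul_cycle,
    Unitary.coe_star_mul_self hH.eigenvectorUnitary, Matrix.one_mul, Matrix.trace_diagonal]

/-- E‖ŵ‖² ≥ σ² Σ_{λᵢ>0} 1/λᵢ for ŵ = (XM)†(Xw* + ε). -/
theorem expected_norm_lower_bound {n d : ℕ} {Ω : Type} [MeasurableSpace Ω]
    (μ : Measure Ω) [IsProbabilityMeasure μ] (σ : ℝ)
    (X : Matrix (Fin n) (Fin d) ℝ) (v : Fin d → ℝ) (hv : ∀ i, v i = 0 ∨ v i = 1)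
    (M : Matrix (Fin d) (Fin d) ℝ) (hM : M = Matrix.diagonal v)
    (wstar : Fin d → ℝ) (ε : Ω → Fin n → ℝ)
    (hmeas : ∀ i, Measurable fun ω => ε ω i)
    (hmean : ∀ i, ∫ ω, ε ω i ∂μ = 0)
    (hint : ∀ i j, Integrable (fun ω => ε ω i * ε ω j) μ)
    (hcov : ∀ i j, ∫ ω, ε ω i * ε ω j ∂μ = if i = j then σ ^ 2 else 0)
    (P : Matrix (Fin d) (Fin n) ℝ) (hP : IsMoorePenrose (X * M) P)
    (hH : (M * Xᵀ * X * M).IsHermitian) :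
    (∑ i ∈ Finset.univ.filter (fun i => 0 < hH.eigenvalues i), σ ^ 2 / hH.eigenvalues i) ≤
      ∫ ω, ∑ j, (P.mulVec (X.mulVec wstar + ε ω) j) ^ 2 ∂μ := by
  classical
  -- structural facts
  have hHA : M * Xᵀ * X * M = (X * M)ᵀ * (X * M) := by
    rw [transpose_mul, hM, diagonal_transpose]; simp only [Matrix.mul_assoc]
  have hPSD : (M * Xᵀ * X * M).PosSemidef := by
    rw [hHA]; simpa using posSemidef_conjTranspose_mul_self (X * M)
  have hnn : ∀ i, 0 ≤ hH.eigenvalues i := fun i => hPSD.eigenvalues_nonneg i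
  have htr : Matrix.trace (P * Pᵀ) = ∑ i, (hH.eigenvalues i)⁻¹ :=
    trace_ppt hH (X * M) P hP hHA
  have htrent : Matrix.trace (P * Pᵀ) = ∑ j, ∑ i, (P j i) ^ 2 := by
    simp [Matrix.trace, Matrix.diag, Matrix.mul_apply, sq]
  -- LHS
  have hLHS : (∑ i ∈ Finset.univ.filter (fun i => 0 < hH.eigenvalues i),
      σ ^ 2 / hH.eigenvalues i) = σ ^ 2 * ∑ i, (hH.eigenvalues i)⁻¹ := by
    rw [Finset.sum_filter_of_ne (fun x _ hx => ?_), Finset.mul_sum]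
    · exact Finset.sum_congr rfl fun i _ => div_eq_mul_inv _ _
    · rcases lt_or_eq_of_le (hnn x) with h | h
      · exact h
      · exact absurd (by rw [← h, div_zero]) hx
  -- probabilistic setup
  set c : Fin d → ℝ := P.mulVec (X.mulVec wstar) with hc
  have hε1 : ∀ i, Integrable (fun ω => ε ω i) μ := by
    intro i
    refine Integrable.mono' ((integrable_const (1:ℝ)).add (hint i i))
      (hmeas i).aestronglyMeasurable ?_
    filter_upwards with ω
    have := abs_mul_abs_self (ε ω i)
    have := abs_nonneg (ε ω i)
    simp only [Real.norm_eq_abs, Pi.add_apply]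
    nlinarith
  set S : Fin d → Ω → ℝ := fun j ω => ∑ i, P j i * ε ω i with hS
  have hS_int : ∀ j, Integrable (S j) μ := fun j =>
    integrable_finset_sum _ fun i _ => (hε1 i).const_mul _
  have hS_mean : ∀ j, ∫ ω, S j ω ∂μ = 0 := by
    intro j
    rw [hS]
    rw [integral_finset_sum _ fun i _ => (hε1 i).const_mul _]
    simp [integral_const_mul, hmean]
  have hS2eq : ∀ j, (fun ω => S j ω * S j ω)
      = fun ω => ∑ i, ∑ i', (P j i * P j i') * (ε ω i * ε ω i') := by
    intro j
    funext ω
    rw [hS]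
    rw [Finset.sum_mul_sum]
    exact Finset.sum_congr rfl fun i _ => Finset.sum_congr rfl fun i' _ => by ring
  have hS2_int : ∀ j, Integrable (fun ω => S j ω * S j ω) μ := by
    intro j
    rw [hS2eq j]
    exact integrable_finset_sum _ fun i _ => integrable_finset_sum _ fun i' _ =>
      (hint i i').const_mul _
  have hS2_val : ∀ j, ∫ ω, S j ω * S j ω ∂μ = σ ^ 2 * ∑ i, (P j i) ^ 2 := by
    intro j
    rw [hS2eq j]
    rw [integral_finset_sum _ fun i _ => integrable_finset_sum _ fun i' _ =>
      (hint i i').const_mul _]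
    have : ∀ i, ∫ ω, ∑ i', (P j i * P j i') * (ε ω i * ε ω i') ∂μ
        = (P j i) ^ 2 * σ ^ 2 := by
      intro i
      rw [integral_finset_sum _ fun i' _ => (hint i i').const_mul _]
      have h2 : ∀ i', ∫ ω, (P j i * P j i') * (ε ω i * ε ω i') ∂μ
          = (P j i * P j i') * (if i = i' then σ ^ 2 else 0) := by
        intro i'
        rw [integral_const_mul, hcov]
      simp only [h2, mul_ite, mul_zero, Finset.sum_ite_eq, Finset.mem_univ, if_true]
      ring
    calc ∑ i, ∫ ω, ∑ i', (P j i * P j i') * (ε ω i * ε ω i') ∂μ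
        = ∑ i, (P j i) ^ 2 * σ ^ 2 := Finset.sum_congr rfl fun i _ => this i
      _ = σ ^ 2 * ∑ i, (P j i) ^ 2 := by
          rw [Finset.mul_sum]; exact Finset.sum_congr rfl fun i _ => mul_comm _ _
  -- the integrand
  have hfun : ∀ ω j, P.mulVec (X.mulVec wstar + ε ω) j ^ 2
      = c j ^ 2 + (2 * c j) * S j ω + S j ω * S j ω := by
    intro ω j
    have : P.mulVec (X.mulVec wstar + ε ω) j = c j + S j ω := by
      simp only [mulVec_add, Pi.add_apply]
      congr 1
    rw [this]; ring
  have hterm_int : ∀ j, Integrable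
      (fun ω => c j ^ 2 + (2 * c j) * S j ω + S j ω * S j ω) μ :=
    fun j => (((integrable_const _).add ((hS_int j).const_mul _)).add (hS2_int j))
  have hint_total : ∫ ω, ∑ j, (P.mulVec (X.mulVec wstar + ε ω) j) ^ 2 ∂μ
      = ∑ j, (c j ^ 2 + σ ^ 2 * ∑ i, (P j i) ^ 2) := by
    have : (fun ω => ∑ j, (P.mulVec (X.mulVec wstar + ε ω) j) ^ 2)
        = fun ω => ∑ j, (c j ^ 2 + (2 * c j) * S j ω + S j ω * S j ω) := by
      funext ω; exact Finset.sum_congr rfl fun j _ => hfun ω j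
    rw [this, integral_finset_sum _ fun j _ => hterm_int j]
    refine Finset.sum_congr rfl fun j _ => ?_
    have h1 : Integrable (fun ω => c j ^ 2 + 2 * c j * S j ω) μ := by
      exact (integrable_const _).add ((hS_int j).const_mul _)
    have h2 : Integrable (fun ω => (c j ^ 2 : ℝ)) μ := integrable_const _
    have h3 : Integrable (fun ω => 2 * c j * S j ω) μ := (hS_int j).const_mul _
    rw [integral_add h1 (hS2_int j), integral_add h2 h3,
      integral_const, integral_const_mul, hS_mean j, hS2_val j]
    simp
  -- conclude
  rw [hint_total, hLHS, ← htr, htrent, Finset.mul_sum]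
  have : ∀ j : Fin d, σ ^ 2 * ∑ i, (P j i) ^ 2 ≤ c j ^ 2 + σ ^ 2 * ∑ i, (P j i) ^ 2 := by
    intro j; nlinarith [sq_nonneg (c j)]
  exact Finset.sum_le_sum fun j _ => this j
end

section
/- Let Q be a random symmetric n×n matrix such that for every unit vector u and all t ∈ ℝ, E[exp(t⟨u, Qu⟩)] ≤ exp(c t²/8) for a constant c > 0. Suppose unit vectors v_1,…,v_N with N ≤ 17^n satisfy ||Q||₂ ≤ 2 max_j |⟨v_j, Q v_j⟩|. Then for all λ > 0, E[exp(λ ||Q||₂)] ≤ exp(4n + c λ² / 2). -/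
open Matrix Filter Topology MeasureTheory ProbabilityTheory

/-- MGF bound for the spectral norm via a discretization argument. -/
theorem spectral_mgf_bound {n N : ℕ} (hn : 1 ≤ n) (hN : 0 < N) (hNle : N ≤ 17 ^ n)
    (c : ℝ) (hc : 0 < c)
    {Ω : Type} [MeasurableSpace Ω] (μ : Measure Ω) [IsProbabilityMeasure μ]
    (Q : Ω → Matrix (Fin n) (Fin n) ℝ) (hsym : ∀ ω, (Q ω)ᵀ = Q ω)
    (hmeasQ : ∀ i j, Measurable fun ω => Q ω i j)
    (hintQ : ∀ (u : Fin n → ℝ) (t : ℝ),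
      Integrable (fun ω => Real.exp (t * (u ⬝ᵥ (Q ω).mulVec u))) μ)
    (hmgf : ∀ u : Fin n → ℝ, (∑ i, (u i) ^ 2) = 1 → ∀ t : ℝ,
      ∫ ω, Real.exp (t * (u ⬝ᵥ (Q ω).mulVec u)) ∂μ ≤ Real.exp (c * t ^ 2 / 8))
    (v : Fin N → Fin n → ℝ) (hunit : ∀ j, (∑ i, (v j i) ^ 2) = 1)
    (hcover : ∀ ω, specNorm (Q ω) ≤ 2 * ⨆ j, |v j ⬝ᵥ (Q ω).mulVec (v j)|) :
    ∀ l : ℝ, 0 < l →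
      ∫ ω, Real.exp (l * specNorm (Q ω)) ∂μ ≤ Real.exp (4 * n + c * l ^ 2 / 2) := by
  intro l hl
  have hne : Nonempty (Fin N) := ⟨⟨0, hN⟩⟩
  set f : Fin N → Ω → ℝ := fun j ω => v j ⬝ᵥ (Q ω).mulVec (v j) with hf
  have hint : ∀ (j : Fin N) (t : ℝ), Integrable (fun ω => Real.exp (t * f j ω)) μ :=
    fun j t => hintQ (v j) t
  have key : ∀ ω, Real.exp (l * specNorm (Q ω)) ≤
      ∑ j, (Real.exp (2 * l * f j ω) + Real.exp (-(2 * l) * f j ω)) := by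
    intro ω
    obtain ⟨j0, hj0⟩ := Finite.exists_max (fun j => |f j ω|)
    have hsup : (⨆ j, |f j ω|) ≤ |f j0 ω| := ciSup_le hj0
    have h1 : l * specNorm (Q ω) ≤ 2 * l * |f j0 ω| := by
      have := hcover ω
      have h2l : l * specNorm (Q ω) ≤ l * (2 * ⨆ j, |f j ω|) :=
        mul_le_mul_of_nonneg_left this hl.le
      nlinarith
    have h2 : Real.exp (2 * l * |f j0 ω|) ≤
        Real.exp (2 * l * f j0 ω) + Real.exp (-(2 * l) * f j0 ω) := by
      rcases abs_cases (f j0 ω) with ⟨h, _⟩ | ⟨h, _⟩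
      · rw [h]; nlinarith [Real.exp_pos (-(2 * l) * f j0 ω)]
      · rw [h]
        have : 2 * l * -f j0 ω = -(2 * l) * f j0 ω := by ring
        rw [this]; nlinarith [Real.exp_pos (2 * l * f j0 ω)]
    calc Real.exp (l * specNorm (Q ω)) ≤ Real.exp (2 * l * |f j0 ω|) := Real.exp_le_exp.2 h1
      _ ≤ Real.exp (2 * l * f j0 ω) + Real.exp (-(2 * l) * f j0 ω) := h2
      _ ≤ ∑ j, (Real.exp (2 * l * f j ω) + Real.exp (-(2 * l) * f j ω)) :=
          Finset.single_le_sum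
            (f := fun j => Real.exp (2 * l * f j ω) + Real.exp (-(2 * l) * f j ω))
            (fun j _ => by positivity) (Finset.mem_univ j0)
  have hgint : Integrable
      (fun ω => ∑ j, (Real.exp (2 * l * f j ω) + Real.exp (-(2 * l) * f j ω))) μ :=
    integrable_finset_sum _ (fun j _ => (hint j (2 * l)).add (hint j (-(2 * l))))
  have hmono := integral_mono_of_nonneg
    (Filter.Eventually.of_forall fun ω => (Real.exp_pos _).le) hgint
    (Filter.Eventually.of_forall key)
  have hsum : ∫ ω, (∑ j, (Real.exp (2 * l * f j ω) + Real.exp (-(2 * l) * f j ω))) ∂μ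
      = ∑ j, ∫ ω, (Real.exp (2 * l * f j ω) + Real.exp (-(2 * l) * f j ω)) ∂μ :=
    integral_finset_sum _ (fun j _ => (hint j (2 * l)).add (hint j (-(2 * l))))
  have heach : ∀ j : Fin N,
      ∫ ω, (Real.exp (2 * l * f j ω) + Real.exp (-(2 * l) * f j ω)) ∂μ
        ≤ 2 * Real.exp (c * l ^ 2 / 2) := by
    intro j
    rw [integral_add (hint j (2 * l)) (hint j (-(2 * l)))]
    have h1 := hmgf (v j) (hunit j) (2 * l)
    have h2 := hmgf (v j) (hunit j) (-(2 * l))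
    have e1 : c * (2 * l) ^ 2 / 8 = c * l ^ 2 / 2 := by ring
    have e2 : c * (-(2 * l)) ^ 2 / 8 = c * l ^ 2 / 2 := by ring
    rw [e1] at h1; rw [e2] at h2; linarith
  have hsum_le : ∑ j : Fin N, (2 * Real.exp (c * l ^ 2 / 2))
      = (N : ℝ) * (2 * Real.exp (c * l ^ 2 / 2)) := by
    simp [Finset.sum_const, nsmul_eq_mul]
  have hexp4 : (34 : ℝ) ≤ Real.exp 4 := by
    have h := Real.exp_one_gt_d9
    have : Real.exp 4 = Real.exp 1 ^ 4 := by
      rw [← Real.exp_nat_mul]; norm_num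
    rw [this]
    have h2 : (2.7 : ℝ) ^ 4 ≤ Real.exp 1 ^ 4 :=
      pow_le_pow_left₀ (by norm_num) (by linarith) 4
    nlinarith
  have h2N : (2 : ℝ) * N ≤ Real.exp (4 * n) := by
    have h1 : (2 : ℝ) * N ≤ 2 * 17 ^ n := by
      have : (N : ℝ) ≤ (17 : ℝ) ^ n := by exact_mod_cast hNle
      linarith
    have h2 : (2 : ℝ) * 17 ^ n ≤ 34 ^ n := by
      have h3 : (2 : ℝ) ≤ 2 ^ n := by
        calc (2 : ℝ) = 2 ^ 1 := (pow_one 2).symm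
          _ ≤ 2 ^ n := pow_le_pow_right₀ (by norm_num) hn
      have h4 : (34 : ℝ) ^ n = 2 ^ n * 17 ^ n := by
        rw [← mul_pow]; norm_num
      rw [h4]
      have : (0 : ℝ) ≤ 17 ^ n := by positivity
      nlinarith
    have h5 : (34 : ℝ) ^ n ≤ Real.exp 4 ^ n :=
      pow_le_pow_left₀ (by norm_num) hexp4 n
    have h6 : Real.exp 4 ^ n = Real.exp (4 * n) := by
      rw [← Real.exp_nat_mul]; ring_nf
    linarith [h5, h6 ▸ h5]
  calc ∫ ω, Real.exp (l * specNorm (Q ω)) ∂μ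
      ≤ ∫ ω, (∑ j, (Real.exp (2 * l * f j ω) + Real.exp (-(2 * l) * f j ω))) ∂μ := hmono
    _ = ∑ j, ∫ ω, (Real.exp (2 * l * f j ω) + Real.exp (-(2 * l) * f j ω)) ∂μ := hsum
    _ ≤ ∑ j : Fin N, (2 * Real.exp (c * l ^ 2 / 2)) :=
        Finset.sum_le_sum (fun j _ => heach j)
    _ = (N : ℝ) * (2 * Real.exp (c * l ^ 2 / 2)) := hsum_le
    _ ≤ Real.exp (4 * n) * Real.exp (c * l ^ 2 / 2) := by
        have := Real.exp_pos (c * l ^ 2 / 2)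
        nlinarith
    _ = Real.exp (4 * n + c * l ^ 2 / 2) := (Real.exp_add _ _).symm
end
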